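/- Let 1 < γ ≤ 7/4 and f_γ(z) = h(z) + conj(g(z)) with h(z) = (1 - (1-z)^γ)/γ and g(z) = (1 - (1+γz)(1-z)^γ)/(γ(1+γ)) (principal branches). Then f_γ is not injective on 𝔻: there exist distinct points z₁, z₂ ∈ 𝔻 with f_γ(z₁) = f_γ(z₂). -/

import Mathlib

open Complex Metric

theorem stmt_7 (γ : ℝ) (hγ : 1 < γ ∧ γ ≤ 7/4)
    (f : ℂ → ℂ)
    (hf : ∀ z : ℂ, f z = (1 - (1 - z) ^ (γ : ℂ)) / (γ : ℂ) +
      starRingEnd ℂ ((1 - (1 + (γ : ℂ) * z) * (1 - z) ^ (γ : ℂ)) / ((γ : ℂ) * (1 + γ)))) :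
    ∃ z₁ ∈ ball (0 : ℂ) 1, ∃ z₂ ∈ ball (0 : ℂ) 1, z₁ ≠ z₂ ∧ f z₁ = f z₂ := by
  obtain ⟨hγ1, hγ2⟩ := hγ
  have hπ := Real.pi_pos
  set θ : ℝ := Real.pi / (γ + 1) with hθdef
  have hθpos : 0 < θ := by positivity
  have hθlt : θ < Real.pi / 2 := by
    rw [hθdef, div_lt_div_iff₀ (by linarith) two_pos]
    nlinarith
  have hθπ : (γ + 1) * θ = Real.pi := by
    rw [hθdef]; field_simp
  set ε : ℝ := Real.cos θ with hεdef
  have hε : 0 < ε := Real.cos_pos_of_mem_Ioo ⟨by linarith, hθlt⟩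
  have hsin : 0 < Real.sin θ := Real.sin_pos_of_pos_of_lt_pi hθpos (by linarith)
  set c : ℂ := (Real.log ε : ℂ) + (θ : ℂ) * I with hcdef
  have hcim : c.im = θ := by simp [hcdef]
  have hcre : c.re = Real.log ε := by simp [hcdef]
  set w : ℂ := Complex.exp c with hwdef
  have hw0 : w ≠ 0 := Complex.exp_ne_zero c
  have hlogw : Complex.log w = c :=
    Complex.log_exp (by rw [hcim]; linarith) (by rw [hcim]; linarith)
  have hconjw : starRingEnd ℂ w = Complex.exp (starRingEnd ℂ c) := by
    rw [hwdef, ← Complex.exp_conj]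
  have hlogcw : Complex.log (starRingEnd ℂ w) = starRingEnd ℂ c := by
    rw [hconjw]
    exact Complex.log_exp (by simp [hcim, Complex.conj_im]; linarith)
      (by simp [hcim, Complex.conj_im]; linarith)
  have hA : w ^ (γ : ℂ) = Complex.exp (c * γ) := by
    rw [Complex.cpow_def_of_ne_zero hw0, hlogw]
  have hB : (starRingEnd ℂ w) ^ (γ : ℂ) = starRingEnd ℂ (w ^ (γ : ℂ)) := by
    rw [Complex.cpow_def_of_ne_zero (by simpa using hw0), hlogcw, hA, ← Complex.exp_conj,
      map_mul, Complex.conj_ofReal]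
  -- the key reality fact : w * w^γ equals its own conjugate
  have hc2 : c + c * γ = ((Real.log ε * (1 + γ) : ℝ) : ℂ) + (Real.pi : ℂ) * I := by
    apply Complex.ext <;>
      simp [hcdef, Complex.add_re, Complex.add_im, Complex.mul_re, Complex.mul_im] <;>
      nlinarith [hθπ]
  have hkey : w * w ^ (γ : ℂ) = starRingEnd ℂ (w * w ^ (γ : ℂ)) := by
    rw [hA, hwdef, ← Complex.exp_add, hc2, Complex.exp_add, Complex.exp_pi_mul_I,
      ← Complex.ofReal_exp, map_mul, Complex.conj_ofReal]
    simp
  -- membership facts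
  have hwre : w.re = ε * Real.cos θ := by
    rw [hwdef, Complex.exp_re, hcre, hcim, Real.exp_log hε]
  have hwim : w.im = ε * Real.sin θ := by
    rw [hwdef, Complex.exp_im, hcre, hcim, Real.exp_log hε]
  have hsc := Real.sin_sq_add_cos_sq θ
  have hnormsq : Complex.normSq (1 - w) = Real.sin θ ^ 2 := by
    rw [Complex.normSq_apply]
    simp only [Complex.sub_re, Complex.sub_im, Complex.one_re, Complex.one_im, hwre, hwim]
    rw [hεdef]; nlinarith
  have hmem : (1 : ℂ) - w ∈ ball (0 : ℂ) 1 := by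
    rw [mem_ball, dist_zero_right]
    have h1 : ‖(1 : ℂ) - w‖ ^ 2 = Real.sin θ ^ 2 := by
      rw [Complex.sq_norm, hnormsq]
    have hs1 : Real.sin θ < 1 := by nlinarith
    nlinarith [norm_nonneg ((1 : ℂ) - w)]
  have hmem2 : (1 : ℂ) - starRingEnd ℂ w ∈ ball (0 : ℂ) 1 := by
    have : (1 : ℂ) - starRingEnd ℂ w = starRingEnd ℂ (1 - w) := by
      rw [map_sub, map_one]
    rw [this, mem_ball, dist_zero_right, RCLike.norm_conj]
    simpa [mem_ball, dist_zero_right] using hmem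
  refine ⟨1 - w, hmem, 1 - starRingEnd ℂ w, hmem2, ?_, ?_⟩
  · intro h
    have := congrArg Complex.im h
    simp only [Complex.sub_im, Complex.one_im, Complex.conj_im, hwim] at this
    nlinarith
  · rw [hf, hf]
    rw [show (1 : ℂ) - (1 - w) = w from by ring,
      show (1 : ℂ) - (1 - starRingEnd ℂ w) = starRingEnd ℂ w from by ring, hB]
    have hγ0 : (γ : ℂ) ≠ 0 := by
      exact_mod_cast Complex.ofReal_ne_zero.mpr (by linarith)
    have hγ1' : (1 : ℂ) + (γ : ℂ) ≠ 0 := by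
      have : ((1 + γ : ℝ) : ℂ) ≠ 0 := Complex.ofReal_ne_zero.mpr (by linarith)
      push_cast at this; exact this
    simp only [map_div₀, map_sub, map_mul, map_add, map_one, Complex.conj_conj,
      Complex.conj_ofReal]
    have hkey' : w * w ^ (γ : ℂ) = starRingEnd ℂ w * starRingEnd ℂ (w ^ (γ : ℂ)) := by
      rw [hkey, map_mul]
    field_simp
    linear_combination (-(↑γ : ℂ)) * hkey'
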